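/- In the fixed 3-agent instance, equip agent 1 with the additive utility u₁(a) = 4, u₁(b) = 3, u₁(c) = 2, u₁(d) = 1 (which is consistent with a ≻₁ b ≻₁ c ≻₁ d). Then every report of agent 1 yields agent 1 utility at most 5, and both the truthful report a ≻ b ≻ c ≻ d (giving allocation {a,d}) and the report c ≻ b ≻ a ≻ d (giving allocation {b,c}) yield utility exactly 5. Hence both reports are best responses, yet they give agent 1 different allocations. -/

import Mathlib

/-- Sequential allocation: process the picking sequence in order; at each step the
agent whose turn it is receives his most-preferred (earliest in his ranking list)
item among those not yet allocated. Returns each agent's allocation. -/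
def seqAlloc {A I : Type*} [DecidableEq A] [DecidableEq I]
    (prefs : A → List I) : List A → Finset I → A → Finset I
  | [], _ => fun _ => ∅
  | a :: rest, rem =>
    match (prefs a).find? (fun o => decide (o ∈ rem)) with
    | none => seqAlloc prefs rest rem
    | some o => fun j =>
        if j = a then insert o (seqAlloc prefs rest (rem.erase o) j)
        else seqAlloc prefs rest (rem.erase o) j

/-- A report (strict linear order) over the item set `O`, given as a ranking list:
most preferred item first. -/
def IsReport {I : Type*} [DecidableEq I] (O : Finset I) (p : List I) : Prop :=
  p.Nodup ∧ ∀ o, o ∈ p ↔ o ∈ O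

/-- Two-agent sequential allocation: agent `0` ("agent 1") reports `p1`,
agent `1` ("agent 2") reports `p2`. -/
def alloc2 {I : Type*} [DecidableEq I] (p1 p2 : List I)
    (π : List (Fin 2)) (O : Finset I) : Fin 2 → Finset I :=
  seqAlloc (fun a => if a = 0 then p1 else p2) π O

/-- `S` is achievable by agent 1: some report gives agent 1 an allocation including `S`. -/
def Achievable {I : Type*} [DecidableEq I] (p2 : List I) (π : List (Fin 2))
    (O : Finset I) (S : Finset I) : Prop :=
  ∃ p1, IsReport O p1 ∧ S ⊆ alloc2 p1 p2 π O 0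

/-- `o` is strictly preferred to `o'` in the ranking list `p`. -/
def Prefers {I : Type*} [DecidableEq I] (p : List I) (o o' : I) : Prop :=
  p.idxOf o < p.idxOf o'

instance {I : Type*} [DecidableEq I] (p : List I) (o o' : I) : Decidable (Prefers p o o') :=
  inferInstanceAs (Decidable (_ < _))

/-- `u` is an additive utility consistent with the ranking `p` on item set `O`. -/
def Consistent {I : Type*} [DecidableEq I] (O : Finset I) (p : List I) (u : I → ℝ) : Prop :=
  (∀ o ∈ O, 0 < u o) ∧ ∀ o ∈ O, ∀ o' ∈ O, u o' < u o ↔ Prefers p o o'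

/-- Three-agent sequential allocation: agents `0, 1, 2` ("agents 1, 2, 3")
report the ranking lists `p1, p2, p3` respectively. -/
def alloc3 {I : Type*} [DecidableEq I] (p1 p2 p3 : List I)
    (π : List (Fin 3)) (O : Finset I) : Fin 3 → Finset I :=
  seqAlloc (fun ag => if ag = 0 then p1 else if ag = 1 then p2 else p3) π O

namespace FixedInstance

/-- Item `a`. -/
def a : Fin 4 := 0
/-- Item `b`. -/
def b : Fin 4 := 1
/-- Item `c`. -/
def c : Fin 4 := 2
/-- Item `d`. -/
def d : Fin 4 := 3

/-- Agent 1's true preference: `a ≻₁ b ≻₁ c ≻₁ d`. -/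
def pref1 : List (Fin 4) := [a, b, c, d]

/-- Agent 2's (truthful) report: `c ≻₂ d ≻₂ a ≻₂ b`. -/
def pref2 : List (Fin 4) := [c, d, a, b]

/-- Agent 3's (truthful) report: `a ≻₃ b ≻₃ c ≻₃ d`. -/
def pref3 : List (Fin 4) := [a, b, c, d]

/-- The picking sequence `1, 2, 3, 1`. -/
def pick : List (Fin 3) := [0, 1, 2, 0]

/-- The item set `O = {a, b, c, d}`. -/
def items : Finset (Fin 4) := Finset.univ

end FixedInstance


private def v : Fin 4 → ℕ := ![4, 3, 2, 1]

private def allPerms : List (List (Fin 4)) :=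
  [[0,1,2,3], [0,1,3,2], [0,2,1,3], [0,2,3,1], [0,3,1,2], [0,3,2,1], [1,0,2,3], [1,0,3,2], [1,2,0,3], [1,2,3,0], [1,3,0,2], [1,3,2,0], [2,0,1,3], [2,0,3,1], [2,1,0,3], [2,1,3,0], [2,3,0,1], [2,3,1,0], [3,0,1,2], [3,0,2,1], [3,1,0,2], [3,1,2,0], [3,2,0,1], [3,2,1,0]]

private lemma key : ∀ p1 ∈ allPerms,
    ∑ o ∈ alloc3 p1 FixedInstance.pref2 FixedInstance.pref3 FixedInstance.pick
      FixedInstance.items 0, v o ≤ 5 := by decide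

private lemma mem_allPerms (p1 : List (Fin 4)) (h : IsReport FixedInstance.items p1) :
    p1 ∈ allPerms := by
  have hperm : p1.Perm [0,1,2,3] := by
    rw [List.perm_ext_iff_of_nodup h.1 (by decide)]
    intro x
    rw [h.2 x]
    constructor
    · intro _; fin_cases x <;> simp
    · intro _; exact Finset.mem_univ x
  have hsub : ∀ l ∈ ([0,1,2,3] : List (Fin 4)).permutations', l ∈ allPerms := by decide
  exact hsub p1 (List.mem_permutations'.2 hperm)

private lemma sum_uv (u : Fin 4 → ℝ) (hu : u = ![4, 3, 2, 1]) (S : Finset (Fin 4)) :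
    ∑ o ∈ S, u o = ((∑ o ∈ S, v o : ℕ) : ℝ) := by
  push_cast
  refine Finset.sum_congr rfl fun o _ => ?_
  subst hu; fin_cases o <;> simp [v]

private lemma bound5 (u : Fin 4 → ℝ) (hu : u = ![4, 3, 2, 1]) (p1 : List (Fin 4))
    (hp1 : IsReport FixedInstance.items p1) :
    ∑ o ∈ alloc3 p1 FixedInstance.pref2 FixedInstance.pref3 FixedInstance.pick
      FixedInstance.items 0, u o ≤ 5 := by
  rw [sum_uv _ hu]
  have h := key p1 (mem_allPerms p1 hp1)
  calc ((∑ o ∈ alloc3 p1 FixedInstance.pref2 FixedInstance.pref3 FixedInstance.pick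
      FixedInstance.items 0, v o : ℕ) : ℝ) ≤ ((5 : ℕ) : ℝ) := by exact_mod_cast h
    _ = 5 := by norm_num

private lemma truthval (u : Fin 4 → ℝ) (hu : u = ![4, 3, 2, 1]) :
    ∑ o ∈ alloc3 [FixedInstance.a, FixedInstance.b, FixedInstance.c, FixedInstance.d]
      FixedInstance.pref2 FixedInstance.pref3 FixedInstance.pick FixedInstance.items 0,
      u o = 5 := by
  rw [sum_uv _ hu, show (alloc3 [FixedInstance.a, FixedInstance.b, FixedInstance.c, FixedInstance.d]
    FixedInstance.pref2 FixedInstance.pref3 FixedInstance.pick FixedInstance.items 0)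
    = ({0, 3} : Finset (Fin 4)) from by decide,
    Finset.sum_pair (show (0 : Fin 4) ≠ 3 by decide)]
  norm_num [v, show (![4, 3, 2, 1] : Fin 4 → ℕ) 3 = 1 from rfl]

private lemma altval (u : Fin 4 → ℝ) (hu : u = ![4, 3, 2, 1]) :
    ∑ o ∈ alloc3 [FixedInstance.c, FixedInstance.b, FixedInstance.a, FixedInstance.d]
      FixedInstance.pref2 FixedInstance.pref3 FixedInstance.pick FixedInstance.items 0,
      u o = 5 := by
  rw [sum_uv _ hu, show (alloc3 [FixedInstance.c, FixedInstance.b, FixedInstance.a, FixedInstance.d]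
    FixedInstance.pref2 FixedInstance.pref3 FixedInstance.pick FixedInstance.items 0)
    = ({1, 2} : Finset (Fin 4)) from by decide,
    Finset.sum_pair (show (1 : Fin 4) ≠ 2 by decide)]
  norm_num [v, show (![4, 3, 2, 1] : Fin 4 → ℕ) 2 = 2 from rfl]

open FixedInstance in
/-- In the fixed 3-agent instance, equip agent 1 with the
additive utility `u(a)=4, u(b)=3, u(c)=2, u(d)=1` (consistent with
`a ≻₁ b ≻₁ c ≻₁ d`).  Every report of agent 1 yields utility at most `5`; the
truthful report `a ≻ b ≻ c ≻ d` gives allocation `{a,d}` of utility exactly `5`,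
and the report `c ≻ b ≻ a ≻ d` gives allocation `{b,c}` of utility exactly `5`.
Hence both reports are best responses, yet they give agent 1 different
allocations. -/
theorem statement10 (u : Fin 4 → ℝ) (hu : u = ![4, 3, 2, 1]) :
    Consistent items pref1 u ∧
    (∀ p1 : List (Fin 4), IsReport items p1 →
      ∑ o ∈ alloc3 p1 pref2 pref3 pick items 0, u o ≤ 5) ∧
    (alloc3 [a, b, c, d] pref2 pref3 pick items 0 = {a, d} ∧
      ∑ o ∈ alloc3 [a, b, c, d] pref2 pref3 pick items 0, u o = 5) ∧
    (alloc3 [c, b, a, d] pref2 pref3 pick items 0 = {b, c} ∧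
      ∑ o ∈ alloc3 [c, b, a, d] pref2 pref3 pick items 0, u o = 5) ∧
    (∀ p1 : List (Fin 4), IsReport items p1 →
      ∑ o ∈ alloc3 p1 pref2 pref3 pick items 0, u o ≤
        ∑ o ∈ alloc3 [a, b, c, d] pref2 pref3 pick items 0, u o) ∧
    (∀ p1 : List (Fin 4), IsReport items p1 →
      ∑ o ∈ alloc3 p1 pref2 pref3 pick items 0, u o ≤
        ∑ o ∈ alloc3 [c, b, a, d] pref2 pref3 pick items 0, u o) ∧
    alloc3 [a, b, c, d] pref2 pref3 pick items 0 ≠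
      alloc3 [c, b, a, d] pref2 pref3 pick items 0 := by
  refine ⟨⟨?_, ?_⟩, fun p1 hp1 => bound5 u hu p1 hp1, ⟨by decide, truthval u hu⟩,
    ⟨by decide, altval u hu⟩,
    fun p1 hp1 => by rw [truthval u hu]; exact bound5 u hu p1 hp1,
    fun p1 hp1 => by rw [altval u hu]; exact bound5 u hu p1 hp1, by decide⟩
  · intro o _; subst hu; fin_cases o <;> norm_num
  · intro o _ o' _
    subst hu
    fin_cases o <;> fin_cases o' <;>
      simp [Prefers, FixedInstance.pref1, FixedInstance.a, FixedInstance.b,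
        FixedInstance.c, FixedInstance.d] <;> norm_num
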